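/- With the notation of the Toda chain symmetry: if the eigenvalues of Q(b,a), listed in increasing order with multiplicities, are λ₀ ≤ λ₁ ≤ ⋯ ≤ λ_{2N−1}, then the eigenvalues of Q(b̃,ã), listed in increasing order, satisfy λ̃_n = −λ_{2N−1−n} for all 0 ≤ n ≤ 2N−1; consequently the characteristic polynomials satisfy χ̃_N(μ) = χ_N(−μ). -/

import Mathlib

open Polynomial

/-- The `2N × 2N` periodic Jacobi matrix built from diagonal `b` and off-diagonal `a`. -/
def JacobiQ (N : ℕ) (b a : ZMod (2 * N) → ℝ) : Matrix (ZMod (2 * N)) (ZMod (2 * N)) ℝ :=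
  fun i j =>
    (if j = i then b i else 0) + (if j = i + 1 then a i else 0) +
      (if i = j + 1 then a j else 0)

section Aux

variable {n : Type*} [DecidableEq n] [Fintype n] {R : Type*} [CommRing R]

/-- Characteristic polynomial is invariant under conjugation. -/
lemma charpoly_conj_aux (U M V : Matrix n n R) (hUV : U * V = 1) :
    (U * M * V).charpoly = M.charpoly := by
  have hmap : U.map C * V.map C = 1 := by
    rw [← Matrix.map_mul, hUV, Matrix.map_one _ (map_zero C) (map_one C)]
  have key : Matrix.charmatrix (U * M * V) = U.map C * Matrix.charmatrix M * V.map C := by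
    unfold Matrix.charmatrix
    rw [RingHom.mapMatrix_apply, RingHom.mapMatrix_apply, Matrix.map_mul, Matrix.map_mul,
      Matrix.mul_sub, Matrix.sub_mul]
    congr 1
    · rw [Matrix.scalar_apply, ← Matrix.smul_one_eq_diagonal, Matrix.mul_smul, Matrix.smul_mul,
        mul_one, hmap]
  rw [Matrix.charpoly, key, Matrix.det_mul, Matrix.det_mul, Matrix.charpoly]
  have hdet : (U.map C).det * (V.map C).det = 1 := by
    rw [← Matrix.det_mul, hmap, Matrix.det_one]
  calc (U.map C).det * (Matrix.charmatrix M).det * (V.map C).det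
      = (Matrix.charmatrix M).det * ((U.map C).det * (V.map C).det) := by ring
    _ = (Matrix.charmatrix M).det := by rw [hdet, mul_one]

/-- charpoly of `-M` for even-dimensional matrices. -/
lemma charpoly_neg_even (M : Matrix n n R) (h : Even (Fintype.card n)) :
    (-M).charpoly = M.charpoly.comp (-X) := by
  have hmap : (Matrix.charmatrix M).map (aeval (-X : R[X]))
      = -(Matrix.charmatrix (-M)) := by
    apply Matrix.ext
    intro i j
    by_cases hij : i = j
    · subst hij
      rw [Matrix.map_apply, Matrix.charmatrix_apply_eq, Matrix.neg_apply,
        Matrix.charmatrix_apply_eq, ← comp_eq_aeval, sub_comp, X_comp, C_comp, Matrix.neg_apply,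
        map_neg]
      ring
    · rw [Matrix.map_apply, Matrix.charmatrix_apply_ne _ _ _ hij, Matrix.neg_apply,
        Matrix.charmatrix_apply_ne _ _ _ hij, ← comp_eq_aeval, neg_comp, C_comp, Matrix.neg_apply,
        map_neg]
      ring
  rw [comp_eq_aeval, Matrix.charpoly, Matrix.charpoly, AlgHom.map_det, AlgHom.mapMatrix_apply, hmap, Matrix.det_neg,
    h.neg_one_pow, one_mul]

end Aux


namespace TodaAux

noncomputable def eps (m : ℕ) (i : ZMod m) : ℝ := (-1 : ℝ) ^ i.val

lemma eps_sq (m : ℕ) (i : ZMod m) : eps m i * eps m i = 1 := by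
  rw [eps, ← pow_add]
  exact Even.neg_one_pow ⟨i.val, rfl⟩

lemma eps_succ (N : ℕ) (hN : 2 ≤ N) (i : ZMod (2 * N)) :
    eps (2 * N) (i + 1) = -eps (2 * N) i := by
  haveI : NeZero (2 * N) := ⟨by omega⟩
  haveI : Fact (1 < 2 * N) := ⟨by omega⟩
  have key : ∀ m : ℕ, ((-1 : ℝ)) ^ (m % (2 * N)) = (-1) ^ m := by
    intro m
    have hm : (-1 : ℝ) ^ m = (-1 : ℝ) ^ (2 * N * (m / (2 * N)) + m % (2 * N)) := by
      rw [Nat.div_add_mod]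
    have he : ((-1 : ℝ)) ^ (2 * N) = 1 := Even.neg_one_pow ⟨N, by ring⟩
    rw [hm, pow_add, pow_mul, he, one_pow, one_mul]
  rw [eps, eps, ZMod.val_add, ZMod.val_one, key, pow_succ]
  ring

noncomputable def sflip (N : ℕ) : Matrix (ZMod (2 * N)) (ZMod (2 * N)) ℝ :=
  Matrix.of fun i j => if j = (N : ZMod (2 * N)) - i then eps (2 * N) i else 0

lemma sflip_conj_apply (N : ℕ) [NeZero (2 * N)]
    (M : Matrix (ZMod (2 * N)) (ZMod (2 * N)) ℝ) (i j : ZMod (2 * N)) :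
    (sflip N * M * (sflip N).transpose) i j
      = eps (2 * N) i * eps (2 * N) j *
          M ((N : ZMod (2 * N)) - i) ((N : ZMod (2 * N)) - j) := by
  simp only [Matrix.mul_apply, Matrix.transpose_apply, sflip, Matrix.of_apply, ite_mul, mul_ite,
    zero_mul, mul_zero, Finset.sum_ite_eq', Finset.mem_univ, if_true]
  ring

lemma sflip_mul_transpose (N : ℕ) [NeZero (2 * N)] : sflip N * (sflip N).transpose = 1 := by
  apply Matrix.ext; intro i j
  simp only [Matrix.mul_apply, Matrix.transpose_apply, sflip, Matrix.of_apply, ite_mul, mul_ite,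
    zero_mul, mul_zero, Finset.sum_ite_eq', Finset.mem_univ, if_true, Matrix.one_apply]
  by_cases hij : j = i
  · subst hij
    rw [if_pos rfl, if_pos rfl]
    exact eps_sq _ _
  · rw [if_neg (fun h => hij (sub_right_inj.mp h)), if_neg (Ne.symm hij)]

lemma jacobi_conj (N : ℕ) [NeZero (2 * N)] (hN : 2 ≤ N) (b a : ZMod (2 * N) → ℝ) :
    JacobiQ N (fun i => -b ((N : ZMod (2 * N)) - i)) (fun i => a ((N : ZMod (2 * N)) - 1 - i))
      = sflip N * (-(JacobiQ N b a)) * (sflip N).transpose := by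
  haveI : Fact (1 < 2 * N) := ⟨by omega⟩
  have hone : (1 : ZMod (2 * N)) ≠ 0 := one_ne_zero
  have htwo : (2 : ZMod (2 * N)) ≠ 0 := by
    intro h
    have h2 : ((2 : ℕ) : ZMod (2 * N)) = 0 := by exact_mod_cast h
    rw [ZMod.natCast_eq_zero_iff] at h2
    exact absurd (Nat.le_of_dvd (by norm_num) h2) (by omega)
  apply Matrix.ext; intro i j
  rw [sflip_conj_apply]
  simp only [JacobiQ, Matrix.neg_apply]
  have e1 : ((N : ZMod (2 * N)) - j = (N : ZMod (2 * N)) - i) ↔ (j = i) := sub_right_inj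
  have e2 : ((N : ZMod (2 * N)) - j = (N : ZMod (2 * N)) - i + 1) ↔ (i = j + 1) :=
    ⟨fun h => by linear_combination h, fun h => by linear_combination h⟩
  have e3 : ((N : ZMod (2 * N)) - i = (N : ZMod (2 * N)) - j + 1) ↔ (j = i + 1) :=
    ⟨fun h => by linear_combination h, fun h => by linear_combination h⟩
  simp only [e1, e2, e3]
  by_cases h1 : j = i
  · subst h1
    have hc1 : ¬(j = j + 1) := fun h => hone (by linear_combination -h)
    have hc2 : ¬(j + 1 = j) := fun h => hone (by linear_combination h)
    simp only [eq_self_iff_true, if_true, if_neg hc1, if_neg hc2, add_zero]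
    linear_combination (b ((N : ZMod (2 * N)) - j)) * eps_sq (2 * N) j
  · by_cases h2 : j = i + 1
    · subst h2
      have hc2 : ¬(i = i + 1 + 1) := fun h => htwo (by linear_combination -h)
      have hc1 : ¬(i + 1 = i) := fun h => hone (by linear_combination h)
      simp only [eq_self_iff_true, if_true, if_neg hc1, if_neg hc2, zero_add, add_zero]
      have heq : (N : ZMod (2 * N)) - 1 - i = (N : ZMod (2 * N)) - (i + 1) := by ring
      rw [heq, eps_succ N hN]
      linear_combination (-(a ((N : ZMod (2 * N)) - (i + 1)))) * eps_sq (2 * N) i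
    · by_cases h3 : i = j + 1
      · subst h3
        have hc1 : ¬(j = j + 1) := fun h => hone (by linear_combination -h)
        simp only [eq_self_iff_true, if_true, if_neg hc1, if_neg h2, zero_add, add_zero]
        have heq : (N : ZMod (2 * N)) - 1 - j = (N : ZMod (2 * N)) - (j + 1) := by ring
        rw [heq, eps_succ N hN]
        linear_combination (-(a ((N : ZMod (2 * N)) - (j + 1)))) * eps_sq (2 * N) j
      · simp [h1, h2, h3, fun h : j = i => h1 h]

end TodaAux

theorem stmt11 (N : ℕ) [NeZero (2 * N)] (hN : 2 ≤ N)
    (b a : ZMod (2 * N) → ℝ)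
    (hb : ∀ i, b (i + (N : ZMod (2 * N))) = b i)
    (ha : ∀ i, a (i + (N : ZMod (2 * N))) = a i)
    (lam lamt : Fin (2 * N) → ℝ) (hmono : Monotone lam) (hmonot : Monotone lamt)
    (hchar : (JacobiQ N b a).charpoly = ∏ k : Fin (2 * N), (X - C (lam k)))
    (hchart : (JacobiQ N (fun i => -b ((N : ZMod (2 * N)) - i))
          (fun i => a ((N : ZMod (2 * N)) - 1 - i))).charpoly =
        ∏ k : Fin (2 * N), (X - C (lamt k))) :
    (∀ n : Fin (2 * N), lamt n = -lam n.rev) ∧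
      (JacobiQ N (fun i => -b ((N : ZMod (2 * N)) - i))
          (fun i => a ((N : ZMod (2 * N)) - 1 - i))).charpoly =
        (JacobiQ N b a).charpoly.comp (-X) := by
  haveI : Fact (1 < 2 * N) := ⟨by omega⟩
  have heven : Even (Fintype.card (ZMod (2 * N))) := by
    rw [ZMod.card]; exact ⟨N, by ring⟩
  have h2 : (JacobiQ N (fun i => -b ((N : ZMod (2 * N)) - i))
      (fun i => a ((N : ZMod (2 * N)) - 1 - i))).charpoly
      = (JacobiQ N b a).charpoly.comp (-X) := by
    rw [TodaAux.jacobi_conj N hN b a,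
      charpoly_conj_aux _ _ _ (TodaAux.sflip_mul_transpose N),
      charpoly_neg_even _ heven]
  refine ⟨?_, h2⟩
  set g : Fin (2 * N) → ℝ := fun k => -lam k.rev with hg
  have hgmono : Monotone g := fun k l hkl => neg_le_neg (hmono (Fin.rev_le_rev.mpr hkl))
  have h3 : (∏ k : Fin (2 * N), (X - C (lamt k))) = ∏ k : Fin (2 * N), (X - C (g k)) := by
    rw [← hchart, h2, hchar, Polynomial.prod_comp]
    have hfac : ∀ k : Fin (2 * N), (X - C (lam k)).comp (-X) = -1 * (X - C (-lam k)) := by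
      intro k; rw [sub_comp, X_comp, C_comp, map_neg]; ring
    simp only [hfac]
    rw [Finset.prod_mul_distrib, Finset.prod_const, Finset.card_univ, Fintype.card_fin,
      Even.neg_one_pow ⟨N, by ring⟩, one_mul]
    have := Equiv.prod_comp (Fin.revPerm (n := 2 * N)) (fun k => X - C (-lam k))
    rw [← this]
    exact Finset.prod_congr rfl fun k _ => by simp [hg]
  have hroots : ∀ f : Fin (2 * N) → ℝ,
      (∏ k : Fin (2 * N), (X - C (f k))).roots = Multiset.map f Finset.univ.val := by
    intro f
    have hprod : (∏ k : Fin (2 * N), (X - C (f k)))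
        = (Multiset.map (fun r => X - C r) (Multiset.map f Finset.univ.val)).prod := by
      rw [Multiset.map_map, Finset.prod_eq_multiset_prod]
      rfl
    rw [hprod, roots_multiset_prod_X_sub_C]
  have h4 : Multiset.map lamt Finset.univ.val = Multiset.map g Finset.univ.val := by
    have hr := congrArg Polynomial.roots h3
    rwa [hroots, hroots] at hr
  have h5 : List.ofFn lamt = List.ofFn g := by
    have hperm : (List.ofFn lamt).Perm (List.ofFn g) := by
      rw [Fin.univ_val_map, Fin.univ_val_map] at h4
      exact Multiset.coe_eq_coe.mp h4
    exact List.Perm.eq_of_sortedLE hmonot.sortedLE_ofFn hgmono.sortedLE_ofFn hperm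
  intro n
  exact congrFun (List.ofFn_injective h5) n
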